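/- Fix r, p ≥ 1 and k = ⌊r^p⌋. The set L_n = ℤ^n ∩ rB_p^n satisfies |L_n| = 2^k C(n,k) + O(n^{k-1}); more precisely, every x ∈ L_n with at least k non-zero coordinates has all coordinates in {-1,0,1} and exactly k non-zero coordinates, and the number of points of L_n with at most k-1 non-zero coordinates is at most e^{2⌊r⌋} n^{k-1}. -/

import Mathlib

open Finset

private lemma card_fiber (n m : ℕ) (s : Finset (Fin n)) :
    (Fintype.piFinset fun i => if i ∈ s then (Finset.Icc (-(m:ℤ)) m).erase 0 else {0}).card
      = (2*m) ^ s.card := by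
  classical
  rw [Fintype.card_piFinset]
  have hmem : (0:ℤ) ∈ Finset.Icc (-(m:ℤ)) m := by simp
  have h0 : ((Finset.Icc (-(m:ℤ)) m).erase 0).card = 2*m := by
    rw [Finset.card_erase_of_mem hmem, Int.card_Icc]
    omega
  have : ∀ i : Fin n, (if i ∈ s then (Finset.Icc (-(m:ℤ)) m).erase 0 else {0}).card
      = if i ∈ s then 2*m else 1 := by
    intro i; split <;> simp [h0]
  rw [Finset.prod_congr rfl fun i _ => this i, Finset.prod_ite_mem, Finset.univ_inter,
    Finset.prod_const]

private lemma count_small (n k m : ℕ) :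
    ((Fintype.piFinset fun _ : Fin n => Finset.Icc (-(m:ℤ)) m).filter
        fun x => (univ.filter fun i => x i ≠ 0).card < k).card
      ≤ ∑ j ∈ range k, n.choose j * (2*m)^j := by
  classical
  set P : Finset (Finset (Fin n)) :=
    (range k).biUnion (fun j => (univ : Finset (Fin n)).powersetCard j) with hP
  set Tgt : Finset ((_ : Finset (Fin n)) × (Fin n → ℤ)) := P.sigma fun s =>
    Fintype.piFinset fun i => if i ∈ s then (Finset.Icc (-(m:ℤ)) m).erase 0 else {0} with hTgt
  have step1 : ((Fintype.piFinset fun _ : Fin n => Finset.Icc (-(m:ℤ)) m).filter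
        fun x => (univ.filter fun i => x i ≠ 0).card < k).card ≤ Tgt.card := by
    apply Finset.card_le_card_of_injOn (fun x => ⟨univ.filter (fun i => x i ≠ 0), x⟩)
    · intro x hx
      rw [Finset.mem_coe, Finset.mem_filter, Fintype.mem_piFinset] at hx
      rw [hTgt, Finset.mem_coe, mem_sigma]
      constructor
      · rw [hP, Finset.mem_biUnion]
        exact ⟨_, Finset.mem_range.mpr hx.2, mem_powersetCard_univ.mpr rfl⟩
      · rw [Fintype.mem_piFinset]
        intro i
        by_cases hi : x i = 0 <;> simp [hi]
        simpa using hx.1 i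
    · intro x _ y _ h
      exact congrArg Sigma.snd h
  refine step1.trans ?_
  rw [hTgt, Finset.card_sigma]
  rw [Finset.sum_congr rfl fun s _ => card_fiber n m s, hP, Finset.sum_biUnion]
  · apply Finset.sum_le_sum
    intro j hj
    have : ∀ s ∈ (univ : Finset (Fin n)).powersetCard j, (2*m) ^ s.card = (2*m)^j := by
      intro s hs; rw [mem_powersetCard_univ.mp hs]
    rw [Finset.sum_congr rfl this, Finset.sum_const, Finset.card_powersetCard, card_univ,
      Fintype.card_fin, smul_eq_mul]
  · intro a ha b hb hab
    exact Finset.pairwise_disjoint_powersetCard univ hab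

private lemma count_A (n k : ℕ) :
    Set.ncard {x : Fin n → ℤ | (∀ i, |x i| ≤ 1) ∧ (univ.filter fun i => x i ≠ 0).card = k}
      = 2 ^ k * n.choose k := by
  classical
  set T : Finset (Fin n → ℤ) :=
    (((univ : Finset (Fin n)).powersetCard k).sigma fun s =>
        Fintype.piFinset fun i => if i ∈ s then ({-1, 1} : Finset ℤ) else {0}).image
      (fun q => q.2) with hT
  have key : ∀ q ∈ ((univ : Finset (Fin n)).powersetCard k).sigma fun s =>
        Fintype.piFinset fun i => if i ∈ s then ({-1, 1} : Finset ℤ) else {0},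
      ∀ i : Fin n, q.2 i ≠ 0 ↔ i ∈ q.1 := by
    rintro ⟨s, x⟩ hq i
    rw [mem_sigma, Fintype.mem_piFinset] at hq
    have := hq.2 i
    by_cases hi : i ∈ s <;> simp [hi] at this <;> simp [hi]
    · rcases this with h | h <;> simp [h]
    · exact this
  have hset : {x : Fin n → ℤ | (∀ i, |x i| ≤ 1) ∧ (univ.filter fun i => x i ≠ 0).card = k} = ↑T := by
    ext x
    simp only [hT, coe_image, Set.mem_image, mem_coe, Set.mem_setOf_eq]
    constructor
    · rintro ⟨h1, h2⟩
      refine ⟨⟨univ.filter (fun i => x i ≠ 0), x⟩, ?_, rfl⟩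
      rw [mem_sigma, Fintype.mem_piFinset]
      refine ⟨by simpa [Finset.mem_powersetCard_univ] using h2, fun i => ?_⟩
      by_cases hi : x i = 0 <;> simp [hi]
      have := h1 i
      rw [abs_le] at this
      omega
    · rintro ⟨⟨s, y⟩, hq, rfl⟩
      have hmem := hq
      rw [mem_sigma, Fintype.mem_piFinset] at hmem
      constructor
      · intro i
        have := hmem.2 i
        by_cases hi : i ∈ s <;> simp [hi] at this
        · rcases this with h | h <;> simp [h]
        · simp [this]
      · have : univ.filter (fun i => y i ≠ 0) = s := by
          ext i; simp [key ⟨s, y⟩ hq i]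
        rw [this]
        exact (Finset.mem_powersetCard_univ.mp hmem.1)
  rw [hset, Set.ncard_coe_finset, hT]
  rw [Finset.card_image_of_injOn]
  · rw [Finset.card_sigma]
    have : ∀ s ∈ ((univ : Finset (Fin n)).powersetCard k),
        (Fintype.piFinset fun i => if i ∈ s then ({-1, 1} : Finset ℤ) else {0}).card = 2 ^ k := by
      intro s hs
      rw [Fintype.card_piFinset]
      have : ∀ i : Fin n, (if i ∈ s then ({-1, 1} : Finset ℤ) else {0}).card
          = if i ∈ s then 2 else 1 := by
        intro i; split <;> simp
      rw [Finset.prod_congr rfl fun i _ => this i, Finset.prod_ite_mem, univ_inter,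
        Finset.prod_const, Finset.mem_powersetCard_univ.mp hs]
    rw [Finset.sum_congr rfl this, Finset.sum_const, Finset.card_powersetCard, card_univ,
      Fintype.card_fin, smul_eq_mul, mul_comm]
  · rintro ⟨s, x⟩ hq ⟨t, y⟩ hq' (h : x = y)
    subst h
    have : s = t := by
      ext i
      rw [← key ⟨s, x⟩ hq i, ← key ⟨t, x⟩ hq' i]
    subst this
    rfl

private lemma sum_bound (n k m : ℕ) (hn : 1 ≤ n) (hk : 1 ≤ k) :
    ((∑ j ∈ Finset.range k, n.choose j * (2*m)^j : ℕ) : ℝ)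
      ≤ Real.exp (2*(m:ℝ)) * (n:ℝ)^(k-1) := by
  push_cast
  calc ∑ j ∈ Finset.range k, (n.choose j : ℝ) * (2*(m:ℝ))^j
      ≤ ∑ j ∈ Finset.range k, (n:ℝ)^(k-1) * ((2*(m:ℝ))^j / j.factorial) := by
        apply Finset.sum_le_sum
        intro j hj
        have hjk : j ≤ k - 1 := by have := Finset.mem_range.mp hj; omega
        have h1 : (n.choose j : ℝ) ≤ (n:ℝ)^j / j.factorial := by
          exact_mod_cast Nat.choose_le_pow_div j n
        have h2 : (n:ℝ)^j / j.factorial ≤ (n:ℝ)^(k-1) / j.factorial := by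
          gcongr
          exact_mod_cast hn
        have hm0 : (0:ℝ) ≤ (2*(m:ℝ))^j := by positivity
        calc (n.choose j : ℝ) * (2*(m:ℝ))^j
            ≤ ((n:ℝ)^(k-1)/j.factorial) * (2*(m:ℝ))^j :=
              mul_le_mul_of_nonneg_right (le_trans h1 h2) hm0
          _ = (n:ℝ)^(k-1) * ((2*(m:ℝ))^j / j.factorial) := by ring
    _ = (n:ℝ)^(k-1) * ∑ j ∈ Finset.range k, (2*(m:ℝ))^j / j.factorial := by
        rw [Finset.mul_sum]
    _ ≤ (n:ℝ)^(k-1) * Real.exp (2*(m:ℝ)) := by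
        apply mul_le_mul_of_nonneg_left _ (by positivity)
        exact Real.sum_le_exp_of_nonneg (by positivity) k
    _ = Real.exp (2*(m:ℝ)) * (n:ℝ)^(k-1) := mul_comm _ _

/-- Lattice points of `r B_p^n`: for `r, p ≥ 1` and `k = ⌊r^p⌋`,
`L_n = ℤⁿ ∩ r B_p^n` satisfies `|L_n| = 2^k C(n,k) + O(n^{k-1})`. Precisely:
every `x ∈ L_n` with at least `k` non-zero coordinates has all coordinates in
`{-1,0,1}` and exactly `k` non-zero coordinates; the number of points of `L_n`
with at most `k-1` non-zero coordinates is at most `e^{2⌊r⌋} n^{k-1}`; and the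
set `A_n ⊆ L_n` of sign vectors with exactly `k` non-zero coordinates has
cardinality `2^k C(n,k)`. -/
theorem lattice_ball_cardinality (n : ℕ) (hn : 1 ≤ n) (r p : ℝ) (hr : 1 ≤ r) (hp : 1 ≤ p)
    (k : ℕ) (hk : k = ⌊r ^ p⌋₊)
    (L : Set (Fin n → ℤ)) (hL : L = {x | ∑ i, ((|x i| : ℝ)) ^ p ≤ r ^ p})
    (A : Set (Fin n → ℤ))
    (hA : A = {x | (∀ i, |x i| ≤ 1) ∧ (Finset.univ.filter fun i => x i ≠ 0).card = k}) :
    (∀ x ∈ L, k ≤ (Finset.univ.filter fun i => x i ≠ 0).card →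
        (∀ i, x i = -1 ∨ x i = 0 ∨ x i = 1) ∧
          (Finset.univ.filter fun i => x i ≠ 0).card = k) ∧
      ((Set.ncard {x ∈ L | (Finset.univ.filter fun i => x i ≠ 0).card ≤ k - 1} : ℝ)
          ≤ Real.exp (2 * (⌊r⌋₊ : ℝ)) * (n : ℝ) ^ (k - 1)) ∧
      A ⊆ L ∧ Set.ncard A = 2 ^ k * Nat.choose n k := by
  have hp0 : (0:ℝ) < p := by linarith
  have hr0 : (0:ℝ) < r := by linarith
  have hrp1 : (1:ℝ) ≤ r ^ p := Real.one_le_rpow hr (by linarith)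
  have hk1 : 1 ≤ k := hk ▸ Nat.le_floor (by exact_mod_cast hrp1)
  have hterm0 : ∀ (x : Fin n → ℤ) (i : Fin n), (0:ℝ) ≤ (|x i| : ℝ) ^ p := fun x i =>
    Real.rpow_nonneg (by positivity) p
  have hterm1 : ∀ (x : Fin n → ℤ) (i : Fin n), x i ≠ 0 → (1:ℝ) ≤ (|x i| : ℝ) ^ p := by
    intro x i hi
    apply Real.one_le_rpow _ (by linarith)
    exact_mod_cast Int.one_le_abs hi
  have hsum_lb : ∀ x : Fin n → ℤ,
      (((univ.filter fun i => x i ≠ 0).card : ℝ)) ≤ ∑ i, (|x i| : ℝ) ^ p := by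
    intro x
    calc (((univ.filter fun i => x i ≠ 0).card : ℝ))
        = ∑ _i ∈ univ.filter (fun i => x i ≠ 0), (1:ℝ) := by simp
      _ ≤ ∑ i ∈ univ.filter (fun i => x i ≠ 0), (|x i| : ℝ) ^ p :=
          Finset.sum_le_sum fun i hi => hterm1 x i (Finset.mem_filter.mp hi).2
      _ ≤ ∑ i, (|x i| : ℝ) ^ p :=
          Finset.sum_le_sum_of_subset_of_nonneg (Finset.filter_subset _ _)
            (fun i _ _ => hterm0 x i)
  have hcard_le : ∀ x ∈ L, (univ.filter fun i => x i ≠ 0).card ≤ k := by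
    intro x hx
    rw [hL] at hx
    rw [hk]
    exact Nat.le_floor (le_trans (hsum_lb x) hx)
  have part1 : ∀ x ∈ L, k ≤ (Finset.univ.filter fun i => x i ≠ 0).card →
      (∀ i, x i = -1 ∨ x i = 0 ∨ x i = 1) ∧
        (Finset.univ.filter fun i => x i ≠ 0).card = k := by
    intro x hx hge
    have hcard : (Finset.univ.filter fun i => x i ≠ 0).card = k :=
      le_antisymm (hcard_le x hx) hge
    refine ⟨?_, hcard⟩
    intro i
    by_contra hcon
    push_neg at hcon
    obtain ⟨h1, h2, h3⟩ := hcon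
    have habs : (2:ℤ) ≤ |x i| := by
      rcases abs_cases (x i) with ⟨h, _⟩ | ⟨h, _⟩ <;> omega
    have hxi : x i ≠ 0 := h2
    have hi_mem : i ∈ univ.filter (fun i => x i ≠ 0) := by
      simp [hxi]
    have h2p : (2:ℝ) ≤ (2:ℝ) ^ p := by
      calc (2:ℝ) = (2:ℝ) ^ (1:ℝ) := (Real.rpow_one 2).symm
        _ ≤ (2:ℝ) ^ p := (Real.rpow_le_rpow_left_iff one_lt_two).mpr hp
    have h2xi : (2:ℝ) ^ p ≤ (|x i| : ℝ) ^ p :=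
      Real.rpow_le_rpow (by norm_num) (by exact_mod_cast habs) (by linarith)
    have hsum1 : ∑ j ∈ (univ.filter (fun i => x i ≠ 0)).erase i, (|x j| : ℝ) ^ p
        ≥ ((k:ℝ) - 1) := by
      have : (((univ.filter (fun i => x i ≠ 0)).erase i).card : ℝ)
          ≤ ∑ j ∈ (univ.filter (fun i => x i ≠ 0)).erase i, (|x j| : ℝ) ^ p := by
        calc (((univ.filter (fun i => x i ≠ 0)).erase i).card : ℝ)
            = ∑ _j ∈ (univ.filter (fun i => x i ≠ 0)).erase i, (1:ℝ) := by simp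
          _ ≤ _ := Finset.sum_le_sum fun j hj =>
              hterm1 x j (Finset.mem_filter.mp (Finset.mem_of_mem_erase hj)).2
      rw [Finset.card_erase_of_mem hi_mem, hcard] at this
      have hc : ((k - 1 : ℕ) : ℝ) = (k:ℝ) - 1 := by
        push_cast [hk1]
        ring
      linarith [hc ▸ this]
    have hsum2 : (|x i| : ℝ) ^ p + ∑ j ∈ (univ.filter (fun i => x i ≠ 0)).erase i,
        (|x j| : ℝ) ^ p ≤ ∑ j, (|x j| : ℝ) ^ p := by
      have e1 := Finset.add_sum_erase (univ.filter (fun i => x i ≠ 0))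
        (fun j => (|x j| : ℝ) ^ p) hi_mem
      rw [e1]
      exact Finset.sum_le_sum_of_subset_of_nonneg (Finset.filter_subset _ _)
        (fun j _ _ => hterm0 x j)
    have hup : r ^ p < (k:ℝ) + 1 := by
      rw [hk]
      exact_mod_cast Nat.lt_floor_add_one (r ^ p)
    rw [hL] at hx
    simp only [Set.mem_setOf_eq] at hx
    linarith
  have part3 : A ⊆ L := by
    intro x hx
    rw [hA] at hx
    rw [hL]
    obtain ⟨h1, h2⟩ := hx
    simp only [Set.mem_setOf_eq]
    have hterm : ∀ i : Fin n, (|x i| : ℝ) ^ p = if x i ≠ 0 then (1:ℝ) else 0 := by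
      intro i
      by_cases hi : x i = 0
      · simp [hi, Real.zero_rpow (ne_of_gt hp0)]
      · have habs1 : |x i| = 1 := le_antisymm (h1 i) (Int.one_le_abs hi)
        have habsr : |((x i : ℤ) : ℝ)| = 1 := by exact_mod_cast habs1
        simp [hi, habsr]
    rw [Finset.sum_congr rfl fun i _ => hterm i, Finset.sum_boole, h2, hk]
    exact Nat.floor_le (by positivity)
  refine ⟨part1, ?_, part3, by rw [hA]; exact count_A n k⟩
  classical
  set m := ⌊r⌋₊ with hm
  have habs_le : ∀ x ∈ L, ∀ i, |x i| ≤ (m:ℤ) := by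
    intro x hx i
    rw [hL] at hx
    simp only [Set.mem_setOf_eq] at hx
    have hle : (|x i| : ℝ) ^ p ≤ r ^ p :=
      le_trans (Finset.single_le_sum (fun j _ => hterm0 x j) (Finset.mem_univ i)) hx
    have h2 : ((|x i| : ℤ) : ℝ) ≤ r := by
      have := (Real.rpow_le_rpow_iff (by positivity) (le_of_lt hr0) hp0).mp hle
      exact_mod_cast this
    by_contra hcon
    push_neg at hcon
    have hcast : ((m:ℝ) + 1) ≤ ((|x i| : ℤ) : ℝ) := by
      have : (m:ℤ) + 1 ≤ |x i| := hcon
      exact_mod_cast this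
    have hfl := Nat.lt_floor_add_one r
    rw [← hm] at hfl
    linarith
  set G : Finset (Fin n → ℤ) :=
    (Fintype.piFinset fun _ : Fin n => Finset.Icc (-(m:ℤ)) m).filter
      (fun x => (univ.filter fun i => x i ≠ 0).card < k) with hG
  have hsub : {x ∈ L | (Finset.univ.filter fun i => x i ≠ 0).card ≤ k - 1} ⊆ ↑G := by
    intro x hx
    obtain ⟨hxL, hxc⟩ := hx
    rw [hG, Finset.coe_filter]
    refine ⟨?_, by omega⟩
    rw [Fintype.mem_piFinset]
    intro i
    rw [Finset.mem_Icc]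
    have := habs_le x hxL i
    rw [abs_le] at this
    exact this
  have hncard : Set.ncard {x ∈ L | (Finset.univ.filter fun i => x i ≠ 0).card ≤ k - 1}
      ≤ G.card := by
    rw [← Set.ncard_coe_finset G]
    exact Set.ncard_le_ncard hsub (Finset.finite_toSet G)
  have hGle := count_small n k m
  rw [← hG] at hGle
  have hfinal := sum_bound n k m hn hk1
  calc (Set.ncard {x ∈ L | (Finset.univ.filter fun i => x i ≠ 0).card ≤ k - 1} : ℝ)
      ≤ (G.card : ℝ) := by exact_mod_cast hncard
    _ ≤ ((∑ j ∈ Finset.range k, n.choose j * (2*m)^j : ℕ) : ℝ) := by exact_mod_cast hGle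
    _ ≤ Real.exp (2*(m:ℝ)) * (n:ℝ)^(k-1) := hfinal
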